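/- arXiv:1909.13833 — 5 statements merged into one kernel-verified Lean document; each statement's English description precedes it below -/
import Mathlib

section
/- Let P_Z and P_X* be Borel probability measures on ℝ^{d_Z} and ℝ^{d_X} respectively whose supports are not homeomorphic. Then for any sequence of measurable maps f_n : ℝ^{d_Z} → ℝ^{d_X}, if the pushforwards f_n♯P_Z converge weakly to P_X*, then the bi-Lipschitz constants BiLip f_n tend to infinity. -/
open Set ENNReal Filter MeasureTheory Topology
open NNReal BoundedContinuousFunction

set_option maxHeartbeats 1000000

noncomputable section

/-- The support of a Borel measure: points all of whose open neighbourhoods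
have positive measure. -/
def msupp {X : Type*} [TopologicalSpace X] [MeasurableSpace X] (μ : Measure X) : Set X :=
  {z | ∀ N : Set X, IsOpen N → z ∈ N → 0 < μ N}

lemma isClosed_msupp {X : Type*} [TopologicalSpace X] [MeasurableSpace X] (μ : Measure X) :
    IsClosed (msupp μ) := by
  rw [← isOpen_compl_iff, isOpen_iff_mem_nhds]
  intro z hz
  simp only [mem_compl_iff, msupp, mem_setOf_eq, not_forall] at hz
  obtain ⟨N, hN, hzN, hμN⟩ := hz
  push_neg at hμN
  have hμN0 : μ N = 0 := le_antisymm hμN bot_le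
  filter_upwards [hN.mem_nhds hzN] with y hy
  simp only [mem_compl_iff, msupp, mem_setOf_eq, not_forall]
  exact ⟨N, hN, hy, by simp [hμN0]⟩

lemma measure_compl_msupp {X : Type*} [TopologicalSpace X] [MeasurableSpace X]
    [SecondCountableTopology X] (μ : Measure X) : μ (msupp μ)ᶜ = 0 := by
  set S : Set (Set X) := {N | IsOpen N ∧ μ N = 0} with hS
  obtain ⟨T, hTc, hTS, hTU⟩ := TopologicalSpace.isOpen_sUnion_countable S (fun N hN => hN.1)
  have hsub : (msupp μ)ᶜ ⊆ ⋃₀ S := by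
    intro z hz
    simp only [mem_compl_iff, msupp, mem_setOf_eq, not_forall] at hz
    obtain ⟨N, hN, hzN, hμN⟩ := hz
    push_neg at hμN
    exact ⟨N, ⟨hN, le_antisymm hμN bot_le⟩, hzN⟩
  refine measure_mono_null (hsub.trans (le_of_eq hTU.symm)) ?_
  exact (measure_sUnion_null_iff hTc).mpr (fun s hs => (hTS hs).2)

lemma ext_integral {Ω : Type*} [MeasurableSpace Ω] [MetricSpace Ω] [BorelSpace Ω]
    {μ ν : Measure Ω} [IsFiniteMeasure μ] [IsFiniteMeasure ν]
    (h : ∀ f : Ω →ᵇ ℝ, ∫ x, f x ∂μ = ∫ x, f x ∂ν) : μ = ν := by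
  apply ext_of_forall_lintegral_eq_of_IsFiniteMeasure
  intro f
  set g : Ω →ᵇ ℝ :=
    BoundedContinuousFunction.comp _ (LipschitzWith.subtype_val {x : ℝ | 0 ≤ x}) f with hg
  have hgf : ∀ x, g x = (f x : ℝ) := fun x => rfl
  have h1 : (∫⁻ x, (f x : ℝ≥0∞) ∂μ).toReal = (∫⁻ x, (f x : ℝ≥0∞) ∂ν).toReal := by
    rw [toReal_lintegral_coe_eq_integral, toReal_lintegral_coe_eq_integral]
    simpa only [hgf] using h g
  exact (ENNReal.toReal_eq_toReal_iff' (f.lintegral_lt_top_of_nnreal μ).ne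
    (f.lintegral_lt_top_of_nnreal ν).ne).mp h1

lemma key {dZ dX : ℕ} (PZ : Measure (EuclideanSpace ℝ (Fin dZ)))
    (PXstar : Measure (EuclideanSpace ℝ (Fin dX)))
    [IsProbabilityMeasure PZ] [IsProbabilityMeasure PXstar]
    (C : ℝ≥0) (g : ℕ → EuclideanSpace ℝ (Fin dZ) → EuclideanSpace ℝ (Fin dX))
    (hg : ∀ n, Measurable (g n))
    (hlip : ∀ n, LipschitzWith C (g n))
    (hanti : ∀ n, AntilipschitzWith C (g n))
    (hconv : ∀ hb : BoundedContinuousFunction (EuclideanSpace ℝ (Fin dX)) ℝ,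
      Tendsto (fun n => ∫ x, hb x ∂(PZ.map (g n))) atTop (nhds (∫ x, hb x ∂PXstar))) :
    Nonempty (↥(msupp PZ) ≃ₜ ↥(msupp PXstar)) := by
  classical
  -- a point in the support of PZ
  have hms : (msupp PZ).Nonempty := by
    rw [nonempty_iff_ne_empty]
    intro hemp
    have h0 := measure_compl_msupp PZ
    rw [hemp, compl_empty, measure_univ] at h0
    exact one_ne_zero h0
  obtain ⟨z0, hz0⟩ := hms
  have hp : 0 < PZ (Metric.ball z0 1) := hz0 _ Metric.isOpen_ball (Metric.mem_ball_self one_pos)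
  set p := PZ (Metric.ball z0 1) with hpdef
  have hp1 : p ≤ 1 := prob_le_one
  have hphalf_ne : p / 2 ≠ 0 := by
    simp [ENNReal.div_eq_zero_iff, hp.ne']
  have hphalf_le : p / 2 ≤ 1 := le_trans (ENNReal.half_le_self) hp1
  -- weak convergence of probability measures
  let ν : ℕ → ProbabilityMeasure (EuclideanSpace ℝ (Fin dX)) :=
    fun n => ⟨PZ.map (g n), Measure.isProbabilityMeasure_map (hg n).aemeasurable⟩
  let νs : ProbabilityMeasure (EuclideanSpace ℝ (Fin dX)) := ⟨PXstar, inferInstance⟩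
  have hν : Tendsto ν atTop (nhds νs) := by
    rw [ProbabilityMeasure.tendsto_iff_forall_integral_tendsto]
    exact fun fb => hconv fb
  -- choose a large ball capturing most of PXstar
  have hballs : Tendsto (fun R : ℕ => PXstar (Metric.ball (0 : EuclideanSpace ℝ (Fin dX)) R))
      atTop (nhds (PXstar univ)) := by
    have := MeasureTheory.tendsto_measure_iUnion_atTop
      (μ := PXstar) (s := fun R : ℕ => Metric.ball (0 : EuclideanSpace ℝ (Fin dX)) R)
      (fun a b hab => Metric.ball_subset_ball (by exact_mod_cast hab))
    rwa [Metric.iUnion_ball_nat] at this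
  have hhalf : (1 : ℝ≥0∞) - p / 2 < PXstar univ := by
    rw [measure_univ]
    exact ENNReal.sub_lt_self one_ne_top one_ne_zero hphalf_ne
  obtain ⟨R, hR⟩ := ((tendsto_order.1 hballs).1 _ hhalf).exists
  -- eventually the pushforwards give mass to the ball
  have hlim := ProbabilityMeasure.le_liminf_measure_open_of_tendsto hν
    (Metric.isOpen_ball (x := (0 : EuclideanSpace ℝ (Fin dX))) (ε := (R : ℝ)))
  have hev : ∀ᶠ n in atTop,
      (1 : ℝ≥0∞) - p / 2 < (ν n : Measure (EuclideanSpace ℝ (Fin dX))) (Metric.ball 0 R) :=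
    Filter.eventually_lt_of_lt_liminf (lt_of_lt_of_le hR hlim)
  have hev2 : ∀ᶠ n in atTop,
      (Metric.ball z0 1 ∩ g n ⁻¹' Metric.ball (0 : EuclideanSpace ℝ (Fin dX)) R).Nonempty := by
    filter_upwards [hev] with n hn
    rw [nonempty_iff_ne_empty]
    intro hemp
    have hx : (ν n : Measure (EuclideanSpace ℝ (Fin dX))) (Metric.ball 0 R)
        = PZ (g n ⁻¹' Metric.ball 0 R) := Measure.map_apply (hg n) measurableSet_ball
    rw [hx] at hn
    have hle : p + PZ (g n ⁻¹' Metric.ball 0 R) ≤ 1 := by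
      rw [hpdef, ← measure_union (Set.disjoint_iff_inter_eq_empty.mpr hemp)
        ((hg n) measurableSet_ball)]
      exact prob_le_one
    have hgt : (1 : ℝ≥0∞) < p + PZ (g n ⁻¹' Metric.ball 0 R) := by
      calc (1 : ℝ≥0∞) = p / 2 + (1 - p / 2) := (add_tsub_cancel_iff_le.mpr hphalf_le).symm
        _ < p / 2 + PZ (g n ⁻¹' Metric.ball 0 R) := by
            exact ENNReal.add_lt_add_left (by exact ne_top_of_le_ne_top one_ne_top hphalf_le) hn
        _ ≤ p + PZ (g n ⁻¹' Metric.ball 0 R) := add_le_add_left ENNReal.half_le_self _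
    exact absurd hle (not_le.mpr hgt)
  obtain ⟨K0, hK0⟩ := eventually_atTop.mp hev2
  -- uniform local bound on the shifted sequence
  set r : EuclideanSpace ℝ (Fin dZ) → ℝ := fun z => (R : ℝ) + C * (dist z z0 + 1) with hrdef
  have hbound : ∀ j z, dist (g (K0 + j) z) 0 ≤ r z := by
    intro j z
    obtain ⟨w, hw1, hw2⟩ := hK0 (K0 + j) (Nat.le_add_right _ _)
    have hwz : dist z w ≤ dist z z0 + 1 := by
      calc dist z w ≤ dist z z0 + dist z0 w := dist_triangle _ _ _
        _ ≤ dist z z0 + 1 := by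
            have := Metric.mem_ball.mp hw1
            rw [dist_comm z0 w]
            linarith
    calc dist (g (K0 + j) z) 0 ≤ dist (g (K0 + j) z) (g (K0 + j) w) + dist (g (K0 + j) w) 0 :=
          dist_triangle _ _ _
      _ ≤ C * dist z w + R := add_le_add ((hlip _).dist_le_mul z w)
          (le_of_lt (Metric.mem_ball.mp hw2))
      _ ≤ R + C * (dist z z0 + 1) := by
          have := mul_le_mul_of_nonneg_left hwz C.coe_nonneg
          linarith
  -- dense sequence and diagonal-type extraction via compactness of a product of balls
  obtain ⟨u, hu⟩ := TopologicalSpace.exists_dense_seq (EuclideanSpace ℝ (Fin dZ))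
  have hS : IsCompact (Set.pi univ fun i : ℕ =>
      Metric.closedBall (0 : EuclideanSpace ℝ (Fin dX)) (r (u i))) :=
    isCompact_univ_pi fun i => isCompact_closedBall _ _
  set x : ℕ → (ℕ → EuclideanSpace ℝ (Fin dX)) := fun j i => g (K0 + j) (u i) with hxdef
  have hxS : ∀ j, x j ∈ Set.pi univ fun i : ℕ =>
      Metric.closedBall (0 : EuclideanSpace ℝ (Fin dX)) (r (u i)) := by
    intro j
    rw [Set.mem_univ_pi]
    intro i
    exact Metric.mem_closedBall.mpr (hbound j (u i))
  obtain ⟨v, hvS, ψ, hψ, hψtend⟩ := hS.tendsto_subseq hxS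
  rw [tendsto_pi_nhds] at hψtend
  -- pointwise Cauchy
  have hcauchy : ∀ z, CauchySeq (fun j => g (K0 + ψ j) z) := by
    intro z
    rw [Metric.cauchySeq_iff]
    intro ε hε
    have hC1 : (0 : ℝ) < (C : ℝ) + 1 := by positivity
    set δ : ℝ := ε / (4 * ((C : ℝ) + 1)) with hδdef
    have hδ : 0 < δ := by positivity
    obtain ⟨i, hi⟩ := hu.exists_dist_lt z hδ
    have hci : CauchySeq (fun j => g (K0 + ψ j) (u i)) := by
      have := hψtend i
      exact this.cauchySeq
    rw [Metric.cauchySeq_iff] at hci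
    obtain ⟨N, hN⟩ := hci (ε / 2) (by positivity)
    refine ⟨N, fun a ha b hb => ?_⟩
    have hCδ : (C : ℝ) * δ ≤ ε / 4 := by
      have h4 : ((C : ℝ) + 1) * δ = ε / 4 := by
        rw [hδdef]; field_simp
      calc (C : ℝ) * δ ≤ ((C : ℝ) + 1) * δ := by
            apply mul_le_mul_of_nonneg_right _ hδ.le
            linarith
        _ = ε / 4 := h4
    have h1 : dist (g (K0 + ψ a) z) (g (K0 + ψ a) (u i)) ≤ ε / 4 := by
      refine le_trans ((hlip _).dist_le_mul z (u i)) ?_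
      exact le_trans (mul_le_mul_of_nonneg_left hi.le C.coe_nonneg) hCδ
    have h2 : dist (g (K0 + ψ b) (u i)) (g (K0 + ψ b) z) ≤ ε / 4 := by
      refine le_trans ((hlip _).dist_le_mul (u i) z) ?_
      rw [dist_comm]
      exact le_trans (mul_le_mul_of_nonneg_left hi.le C.coe_nonneg) hCδ
    have h3 := hN a ha b hb
    calc dist (g (K0 + ψ a) z) (g (K0 + ψ b) z)
        ≤ dist (g (K0 + ψ a) z) (g (K0 + ψ a) (u i))
          + dist (g (K0 + ψ a) (u i)) (g (K0 + ψ b) (u i))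
          + dist (g (K0 + ψ b) (u i)) (g (K0 + ψ b) z) := dist_triangle4 _ _ _ _
      _ < ε / 4 + ε / 2 + ε / 4 := by
          have := add_lt_add_of_le_of_lt h1 h3
          linarith
      _ = ε := by ring
  -- the limit map
  have hex : ∀ z, ∃ y, Tendsto (fun j => g (K0 + ψ j) z) atTop (nhds y) :=
    fun z => cauchySeq_tendsto_of_complete (hcauchy z)
  choose h hlimh using hex
  have hlipC : LipschitzWith C h := by
    apply LipschitzWith.of_dist_le_mul
    intro a b
    refine le_of_tendsto ((hlimh a).dist (hlimh b)) ?_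
    exact Eventually.of_forall fun j => (hlip _).dist_le_mul a b
  have hantiC : AntilipschitzWith C h := by
    apply AntilipschitzWith.of_le_mul_dist
    intro a b
    refine ge_of_tendsto (((hlimh a).dist (hlimh b)).const_mul (C : ℝ)) ?_
    exact Eventually.of_forall fun j => (hanti _).le_mul_dist a b
  have hmeas : Measurable h := hlipC.continuous.measurable
  -- the limit map pushes PZ to PXstar
  have hmap : PZ.map h = PXstar := by
    apply ext_integral
    intro fb
    rw [integral_map hmeas.aemeasurable fb.continuous.measurable.aestronglyMeasurable]
    have t1 : Tendsto (fun j => ∫ z, fb (g (K0 + ψ j) z) ∂PZ) atTop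
        (nhds (∫ z, fb (h z) ∂PZ)) := by
      apply tendsto_integral_of_dominated_convergence (fun _ => ‖fb‖)
      · exact fun j => (fb.continuous.measurable.comp (hg _)).aestronglyMeasurable
      · exact integrable_const _
      · exact fun j => Eventually.of_forall fun z => fb.norm_coe_le_norm _
      · exact Eventually.of_forall fun z => (fb.continuous.tendsto _).comp (hlimh z)
    have hidx : Tendsto (fun j => K0 + ψ j) atTop atTop :=
      tendsto_atTop_mono (fun j => Nat.le_add_left (ψ j) K0) hψ.tendsto_atTop
    have t2 : Tendsto (fun j => ∫ z, fb (g (K0 + ψ j) z) ∂PZ) atTop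
        (nhds (∫ x, fb x ∂PXstar)) := by
      have t2' := (hconv fb).comp hidx
      have heq : (fun j => ∫ x, fb x ∂(PZ.map (g (K0 + ψ j))))
          = fun j => ∫ z, fb (g (K0 + ψ j) z) ∂PZ := funext fun j =>
        integral_map (hg _).aemeasurable fb.continuous.measurable.aestronglyMeasurable
      rw [← heq]
      exact t2'
    exact tendsto_nhds_unique t1 t2
  -- h is a closed embedding
  have hemb : Topology.IsClosedEmbedding h := hantiC.isClosedEmbedding hlipC.uniformContinuous
  -- image of the support equals the support of the target
  have himg : h '' msupp PZ = msupp PXstar := by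
    apply Subset.antisymm
    · rintro _ ⟨z, hz, rfl⟩ N hN hzN
      rw [← hmap, Measure.map_apply hmeas hN.measurableSet]
      exact hz _ (hN.preimage hlipC.continuous) hzN
    · intro y hy
      by_contra hyim
      have hclosed : IsClosed (h '' msupp PZ) := hemb.isClosedMap _ (isClosed_msupp PZ)
      have hN := hy _ hclosed.isOpen_compl hyim
      rw [← hmap, Measure.map_apply hmeas hclosed.isOpen_compl.measurableSet] at hN
      have h0 : PZ (h ⁻¹' (h '' msupp PZ)ᶜ) = 0 :=
        measure_mono_null (fun z hz hzs => hz (mem_image_of_mem h hzs)) (measure_compl_msupp PZ)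
      rw [h0] at hN
      exact lt_irrefl _ hN
  -- build the homeomorphism
  have hembs : Topology.IsEmbedding (fun z : msupp PZ => h (z : EuclideanSpace ℝ (Fin dZ))) :=
    hemb.isEmbedding.comp Topology.IsEmbedding.subtypeVal
  refine ⟨(Topology.IsEmbedding.toHomeomorph hembs).trans (Homeomorph.setCongr ?_)⟩
  rw [show (fun z : msupp PZ => h (z : EuclideanSpace ℝ (Fin dZ)))
      = h ∘ (Subtype.val : msupp PZ → EuclideanSpace ℝ (Fin dZ)) from rfl]
  rw [Set.range_comp, Subtype.range_coe]
  exact himg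

/-- The bi-Lipschitz constant of `f`: the infimum over `M ∈ [1,∞]` such that
`M⁻¹ * edist a b ≤ edist (f a) (f b) ≤ M * edist a b` for all `a, b`. -/
noncomputable def eBiLip {α β : Type*} [PseudoEMetricSpace α] [PseudoEMetricSpace β]
    (f : α → β) : ℝ≥0∞ :=
  sInf {M : ℝ≥0∞ | 1 ≤ M ∧ ∀ a b,
    edist a b / M ≤ edist (f a) (f b) ∧ edist (f a) (f b) ≤ M * edist a b}

/-- If the supports of the prior and the target are not homeomorphic, any sequence of
measurable pushforward maps whose pushforwards converge weakly to the target must have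
bi-Lipschitz constants diverging to infinity. -/
theorem stmt7 {dZ dX : ℕ}
    (PZ : Measure (EuclideanSpace ℝ (Fin dZ)))
    (PXstar : Measure (EuclideanSpace ℝ (Fin dX)))
    [IsProbabilityMeasure PZ] [IsProbabilityMeasure PXstar]
    (hne : ¬ Nonempty (↥(msupp PZ) ≃ₜ ↥(msupp PXstar)))
    (f : ℕ → EuclideanSpace ℝ (Fin dZ) → EuclideanSpace ℝ (Fin dX))
    (hf : ∀ n, Measurable (f n))
    (hconv : ∀ h : BoundedContinuousFunction (EuclideanSpace ℝ (Fin dX)) ℝ,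
      Tendsto (fun n => ∫ x, h x ∂(PZ.map (f n))) atTop (nhds (∫ x, h x ∂PXstar))) :
    Tendsto (fun n => eBiLip (f n)) atTop (nhds ⊤) := by
  by_contra hcon
  rw [ENNReal.tendsto_nhds_top_iff_nat] at hcon
  push_neg at hcon
  obtain ⟨m, hm⟩ := hcon
  have hm' : ∃ᶠ n in atTop, eBiLip (f n) ≤ (m : ℝ≥0∞) :=
    hm
  obtain ⟨φ, hφ, hφm⟩ := Filter.extraction_of_frequently_atTop hm'
  set C : ℝ≥0 := (m : ℝ≥0) + 1 with hCdef
  have hCC : ((m : ℝ≥0∞)) < (C : ℝ≥0∞) := by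
    rw [hCdef]
    push_cast
    exact ENNReal.lt_add_right (by simp) one_ne_zero
  have hC : ∀ k, ∃ M : ℝ≥0∞, (1 ≤ M ∧ ∀ a b,
      edist a b / M ≤ edist (f (φ k) a) (f (φ k) b) ∧
      edist (f (φ k) a) (f (φ k) b) ≤ M * edist a b) ∧ M < (C : ℝ≥0∞) := by
    intro k
    have hlt : eBiLip (f (φ k)) < (C : ℝ≥0∞) := lt_of_le_of_lt (hφm k) hCC
    rw [eBiLip, sInf_lt_iff] at hlt
    obtain ⟨M, hM, hMC⟩ := hlt
    exact ⟨M, hM, hMC⟩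
  have hlip : ∀ k, LipschitzWith C (f (φ k)) := by
    intro k
    obtain ⟨M, ⟨hM1, hMb⟩, hMC⟩ := hC k
    intro a b
    exact le_trans (hMb a b).2 (mul_le_mul_left hMC.le _)
  have hanti : ∀ k, AntilipschitzWith C (f (φ k)) := by
    intro k
    obtain ⟨M, ⟨hM1, hMb⟩, hMC⟩ := hC k
    intro a b
    have hM0 : M ≠ 0 := fun h0 => by simp [h0] at hM1
    have hMt : M ≠ ⊤ := hMC.ne_top
    have h1 := (hMb a b).1
    rw [ENNReal.div_le_iff_le_mul (Or.inl hM0) (Or.inl hMt)] at h1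
    calc edist a b ≤ edist (f (φ k) a) (f (φ k) b) * M := h1
      _ ≤ edist (f (φ k) a) (f (φ k) b) * (C : ℝ≥0∞) := mul_le_mul_right hMC.le _
      _ = (C : ℝ≥0∞) * edist (f (φ k) a) (f (φ k) b) := mul_comm _ _
  have hconv' : ∀ hb : BoundedContinuousFunction (EuclideanSpace ℝ (Fin dX)) ℝ,
      Tendsto (fun k => ∫ x, hb x ∂(PZ.map (f (φ k)))) atTop (nhds (∫ x, hb x ∂PXstar)) :=
    fun hb => (hconv hb).comp hφ.tendsto_atTop
  exact hne (key PZ PXstar C (fun k => f (φ k)) (fun k => hf _) hlip hanti hconv')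


end
end

section
/- Let P_Z and P_X⁰ be Borel probability measures on ℝ^{d_Z} and ℝ^{d_X} with non-homeomorphic supports, and let ρ be a metric for the weak topology. Then there exists a nonincreasing function M : [0,∞) → [1,∞] with M(ε) → ∞ as ε → 0 such that for any probability measure P_X* on ℝ^{d_X} and any measurable f, if ρ(P_X*, P_X⁰) ≤ ε and ρ(f♯P_Z, P_X*) ≤ ε, then BiLip f ≥ M(ε). -/
open Set ENNReal Filter MeasureTheory Topology

noncomputable section

set_option linter.unusedSectionVars false

namespace Stmt8Aux

variable {X : Type*} [TopologicalSpace X] [MeasurableSpace X]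

lemma isClosed_msupp (μ : Measure X) : IsClosed (msupp μ) := by
  rw [← isOpen_compl_iff]
  have h : (msupp μ)ᶜ = ⋃₀ {U | IsOpen U ∧ μ U = 0} := by
    ext z
    constructor
    · intro hz
      simp only [mem_compl_iff, msupp, mem_setOf_eq, not_forall] at hz
      obtain ⟨N, hNo, hzN, hN⟩ := hz
      exact ⟨N, ⟨hNo, le_zero_iff.mp (not_lt.mp hN)⟩, hzN⟩
    · rintro ⟨U, ⟨hUo, hU0⟩, hzU⟩
      intro hz
      exact (hz U hUo hzU).ne' hU0
  rw [h]
  exact isOpen_sUnion fun U hU => hU.1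

lemma measure_compl_msupp [SecondCountableTopology X] (μ : Measure X) : μ (msupp μ)ᶜ = 0 := by
  obtain ⟨B, hBc, -, hB⟩ := TopologicalSpace.exists_countable_basis X
  have hsub : (msupp μ)ᶜ ⊆ ⋃₀ {U ∈ B | μ U = 0} := by
    intro z hz
    simp only [mem_compl_iff, msupp, mem_setOf_eq, not_forall] at hz
    obtain ⟨N, hNo, hzN, hN⟩ := hz
    obtain ⟨U, hU, hzU, hUN⟩ := hB.exists_subset_of_mem_open hzN hNo
    exact ⟨U, ⟨hU, le_zero_iff.mp ((measure_mono hUN).trans (le_zero_iff.mpr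
      (le_zero_iff.mp (not_lt.mp hN))))⟩, hzU⟩
  refine le_zero_iff.mp ((measure_mono hsub).trans (le_zero_iff.mpr ?_))
  rw [measure_sUnion_null_iff (hBc.mono (sep_subset _ _))]
  exact fun U hU => hU.2

lemma msupp_nonempty (μ : Measure X) [SecondCountableTopology X] [IsProbabilityMeasure μ] :
    (msupp μ).Nonempty := by
  by_contra h
  rw [not_nonempty_iff_eq_empty] at h
  have := measure_compl_msupp μ
  rw [h, compl_empty, measure_univ] at this
  exact one_ne_zero this

lemma one_le_eBiLip {α β : Type*} [PseudoEMetricSpace α] [PseudoEMetricSpace β] (f : α → β) :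
    1 ≤ eBiLip f :=
  le_sInf fun _ hM => hM.1

lemma biLip_of_lt {α β : Type*} [PseudoEMetricSpace α] [PseudoEMetricSpace β] {f : α → β}
    {C : ℝ≥0∞} (h : eBiLip f < C) (a b : α) :
    edist a b ≤ C * edist (f a) (f b) ∧ edist (f a) (f b) ≤ C * edist a b := by
  obtain ⟨K, hK, hKC⟩ := sInf_lt_iff.mp h
  have hK0 : K ≠ 0 := fun h0 => by simp [h0] at hK
  have hKt : K ≠ ⊤ := hKC.ne_top
  constructor
  · have h1 := (hK.2 a b).1
    have := (ENNReal.div_le_iff hK0 hKt).mp h1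
    calc edist a b ≤ edist (f a) (f b) * K := this
      _ = K * edist (f a) (f b) := mul_comm _ _
      _ ≤ C * edist (f a) (f b) := mul_le_mul_left hKC.le _
  · exact (hK.2 a b).2.trans (mul_le_mul_left hKC.le _)


set_option linter.unusedSectionVars false

variable {E F : Type*}
  [MetricSpace E] [MeasurableSpace E] [BorelSpace E] [SecondCountableTopology E]
  [ProperSpace E] [Nonempty E]
  [MetricSpace F] [MeasurableSpace F] [BorelSpace F] [SecondCountableTopology F]
  [ProperSpace F] [Nonempty F]

lemma exists_homeo_of_bound (PZ : Measure E) (PX0 : Measure F)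
    [IsProbabilityMeasure PZ] [IsProbabilityMeasure PX0]
    {L B : ℝ} (hL : 1 ≤ L) (z₀ : E) (x₀ : F) (f : ℕ → E → F)
    (hup : ∀ n a b, dist (f n a) (f n b) ≤ L * dist a b)
    (hlo : ∀ n a b, dist a b ≤ L * dist (f n a) (f n b))
    (hconv : ∀ h : BoundedContinuousFunction F ℝ,
      Tendsto (fun n => ∫ z, h (f n z) ∂PZ) atTop (𝓝 (∫ x, h x ∂PX0)))
    (hbd : ∀ n z, dist (f n z) x₀ ≤ B + L * dist z z₀) :
    Nonempty (↥(msupp PZ) ≃ₜ ↥(msupp PX0)) := by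
  have hL0 : (0:ℝ) < L := one_pos.trans_le hL
  have hcont : ∀ n, Continuous (f n) := fun n =>
    (LipschitzWith.of_dist_le_mul (K := L.toNNReal) (fun a b => by
      rw [Real.coe_toNNReal L hL0.le]; exact hup n a b)).continuous
  set u : ℕ → E := TopologicalSpace.denseSeq E with hu
  have hud : DenseRange u := TopologicalSpace.denseRange_denseSeq E
  set s : Set (∀ _ : ℕ, F) := univ.pi (fun k => Metric.closedBall x₀ (B + L * dist (u k) z₀))
    with hs
  have hsc : IsCompact s := isCompact_univ_pi fun k => isCompact_closedBall _ _
  have hmem : ∀ n, (fun k => f n (u k)) ∈ s := fun n k _ =>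
    Metric.mem_closedBall.mpr (hbd n (u k))
  obtain ⟨y, -, φ, hφ, hyt⟩ := hsc.tendsto_subseq hmem
  have hk : ∀ k, Tendsto (fun n => f (φ n) (u k)) atTop (𝓝 (y k)) := fun k =>
    (tendsto_pi_nhds.mp hyt) k
  have hglim : ∀ z : E, ∃ w : F, Tendsto (fun n => f (φ n) z) atTop (𝓝 w) := by
    intro z
    apply cauchySeq_tendsto_of_complete
    rw [Metric.cauchySeq_iff]
    intro ε hε
    obtain ⟨k, hkz⟩ := Metric.denseRange_iff.mp hud z (ε/(3*L)) (by positivity)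
    obtain ⟨N, hN⟩ := Metric.cauchySeq_iff.mp (hk k).cauchySeq (ε/3) (by positivity)
    refine ⟨N, fun m hm n hn => ?_⟩
    have h1 : dist (f (φ m) z) (f (φ m) (u k)) < L * (ε/(3*L)) :=
      lt_of_le_of_lt (hup _ _ _) (mul_lt_mul_of_pos_left hkz hL0)
    have h2 : dist (f (φ n) (u k)) (f (φ n) z) < L * (ε/(3*L)) := by
      refine lt_of_le_of_lt (hup _ _ _) (mul_lt_mul_of_pos_left ?_ hL0)
      rwa [dist_comm]
    have h3 := hN m hm n hn
    have hLε : L * (ε/(3*L)) = ε/3 := by field_simp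
    calc dist (f (φ m) z) (f (φ n) z)
        ≤ dist (f (φ m) z) (f (φ m) (u k)) + dist (f (φ m) (u k)) (f (φ n) (u k)) +
          dist (f (φ n) (u k)) (f (φ n) z) := dist_triangle4 _ _ _ _
      _ < L * (ε/(3*L)) + ε/3 + L * (ε/(3*L)) := by
          exact add_lt_add (add_lt_add h1 h3) h2
      _ = ε := by rw [hLε]; ring
  choose g hg using hglim
  have hgup : ∀ a b, dist (g a) (g b) ≤ L * dist a b := fun a b =>
    le_of_tendsto ((hg a).dist (hg b)) (Eventually.of_forall fun n => hup (φ n) a b)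
  have hglo : ∀ a b, dist a b ≤ L * dist (g a) (g b) := fun a b =>
    ge_of_tendsto (((hg a).dist (hg b)).const_mul L)
      (Eventually.of_forall fun n => hlo (φ n) a b)
  have hgcont : Continuous g := (LipschitzWith.of_dist_le_mul (K := L.toNNReal) (fun a b => by
      rw [Real.coe_toNNReal L hL0.le]; exact hgup a b)).continuous
  have hgmeas : Measurable g := hgcont.measurable
  have hginj : Function.Injective g := by
    intro a b hab
    have := hglo a b
    rw [hab, dist_self, mul_zero] at this
    exact dist_le_zero.mp this
  have hgint : ∀ h : BoundedContinuousFunction F ℝ, ∫ z, h (g z) ∂PZ = ∫ x, h x ∂PX0 := by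
    intro h
    have t1 : Tendsto (fun n => ∫ z, h (f (φ n) z) ∂PZ) atTop (𝓝 (∫ x, h x ∂PX0)) :=
      (hconv h).comp hφ.tendsto_atTop
    have t2 : Tendsto (fun n => ∫ z, h (f (φ n) z) ∂PZ) atTop (𝓝 (∫ z, h (g z) ∂PZ)) := by
      apply tendsto_integral_of_dominated_convergence (fun _ => ‖h‖)
      · exact fun n => (h.continuous.comp (hcont (φ n))).aestronglyMeasurable
      · exact integrable_const _
      · exact fun n => Eventually.of_forall fun z => h.norm_coe_le_norm _
      · exact Eventually.of_forall fun z => (h.continuous.tendsto _).comp (hg z)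
    exact tendsto_nhds_unique t2 t1
  have hmap : PZ.map g = PX0 := by
    haveI : IsProbabilityMeasure (PZ.map g) := Measure.isProbabilityMeasure_map hgmeas.aemeasurable
    apply ext_of_forall_lintegral_eq_of_IsFiniteMeasure
    intro f0
    have h1 : ∫⁻ x, f0 x ∂(PZ.map g) ≠ ⊤ :=
      (BoundedContinuousFunction.lintegral_lt_top_of_nnreal _ f0).ne
    have h2 : ∫⁻ x, f0 x ∂PX0 ≠ ⊤ :=
      (BoundedContinuousFunction.lintegral_lt_top_of_nnreal _ f0).ne
    rw [← ENNReal.toReal_eq_toReal_iff' h1 h2,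
      BoundedContinuousFunction.toReal_lintegral_coe_eq_integral,
      BoundedContinuousFunction.toReal_lintegral_coe_eq_integral]
    have hmapint : ∫ x, (f0 x : ℝ) ∂(PZ.map g) = ∫ z, (f0 (g z) : ℝ) ∂PZ :=
      integral_map hgmeas.aemeasurable
        ((NNReal.continuous_coe.comp f0.continuous).aestronglyMeasurable)
    rw [hmapint]
    set h : BoundedContinuousFunction F ℝ := BoundedContinuousFunction.ofNormedAddCommGroup
      (fun x => (f0 x : ℝ)) (NNReal.continuous_coe.comp f0.continuous) (nndist f0 0 : ℝ)
      (fun x => by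
        rw [Real.norm_eq_abs, abs_of_nonneg (f0 x).coe_nonneg]
        exact_mod_cast BoundedContinuousFunction.NNReal.upper_bound f0 x) with hh
    exact hgint h
  have himg : ∀ z ∈ msupp PZ, g z ∈ msupp PX0 := by
    intro z hz N hNo hgzN
    rw [← hmap, Measure.map_apply hgmeas hNo.measurableSet]
    exact hz _ (hNo.preimage hgcont) hgzN
  have hcomplnull : PZ (msupp PZ)ᶜ = 0 := measure_compl_msupp PZ
  have hsurj : ∀ x ∈ msupp PX0, ∃ z ∈ msupp PZ, g z = x := by
    intro x hx
    have hb : ∀ n : ℕ, ∃ z ∈ msupp PZ, dist (g z) x < 1/(n+1) := by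
      intro n
      have hpos : 0 < PZ (g ⁻¹' Metric.ball x (1/(n+1))) := by
        rw [← Measure.map_apply hgmeas Metric.isOpen_ball.measurableSet, hmap]
        exact hx _ Metric.isOpen_ball (Metric.mem_ball_self (by positivity))
      have hpos2 : 0 < PZ (g ⁻¹' Metric.ball x (1/(n+1)) ∩ msupp PZ) := by
        by_contra hcon
        push_neg at hcon
        have h0 : PZ (g ⁻¹' Metric.ball x (1/(n+1)) ∩ msupp PZ) = 0 := le_zero_iff.mp hcon
        have hle : PZ (g ⁻¹' Metric.ball x (1/(n+1))) ≤
            PZ (g ⁻¹' Metric.ball x (1/(n+1)) ∩ msupp PZ) + PZ (msupp PZ)ᶜ := by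
          refine (measure_mono ?_).trans (measure_union_le _ _)
          intro w hw
          by_cases hwm : w ∈ msupp PZ
          · exact Or.inl ⟨hw, hwm⟩
          · exact Or.inr hwm
        rw [h0, hcomplnull, add_zero] at hle
        exact absurd (le_zero_iff.mp hle) hpos.ne'
      obtain ⟨z, hz1, hz2⟩ := nonempty_of_measure_ne_zero hpos2.ne'
      exact ⟨z, hz2, by simpa [Metric.mem_ball] using hz1⟩
    choose zs hzs1 hzs2 using hb
    have hgz : Tendsto (fun n => g (zs n)) atTop (𝓝 x) := by
      rw [tendsto_iff_dist_tendsto_zero]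
      exact squeeze_zero (fun n => dist_nonneg) (fun n => (hzs2 n).le)
        tendsto_one_div_add_atTop_nhds_zero_nat
    have hcz : CauchySeq (fun n => g (zs n)) := hgz.cauchySeq
    have hzsc : CauchySeq zs := by
      rw [Metric.cauchySeq_iff]
      intro ε hε
      obtain ⟨N, hN⟩ := Metric.cauchySeq_iff.mp hcz (ε/L) (by positivity)
      refine ⟨N, fun m hm n hn => ?_⟩
      calc dist (zs m) (zs n) ≤ L * dist (g (zs m)) (g (zs n)) := hglo _ _
        _ < L * (ε/L) := mul_lt_mul_of_pos_left (hN m hm n hn) hL0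
        _ = ε := by field_simp
    obtain ⟨z, hz⟩ := cauchySeq_tendsto_of_complete hzsc
    refine ⟨z, (isClosed_msupp PZ).mem_of_tendsto hz (Eventually.of_forall hzs1), ?_⟩
    exact tendsto_nhds_unique ((hgcont.tendsto z).comp hz) hgz
  let e : ↥(msupp PZ) → ↥(msupp PX0) := fun z => ⟨g z, himg z z.2⟩
  have hbij : Function.Bijective e := by
    constructor
    · intro a b hab
      exact Subtype.ext (hginj (congrArg Subtype.val hab))
    · rintro ⟨x, hx⟩
      obtain ⟨z, hz1, hz2⟩ := hsurj x hx
      exact ⟨⟨z, hz1⟩, Subtype.ext hz2⟩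
  let eqv := Equiv.ofBijective e hbij
  have hcont1 : Continuous e := (hgcont.comp continuous_subtype_val).subtype_mk _
  have hcont2 : Continuous eqv.symm := by
    have key : ∀ x y : ↥(msupp PX0), dist (eqv.symm x) (eqv.symm y) ≤ L * dist x y := by
      intro x y
      have hx : g ((eqv.symm x : ↥(msupp PZ)) : E) = (x : F) :=
        congrArg Subtype.val (eqv.apply_symm_apply x)
      have hy : g ((eqv.symm y : ↥(msupp PZ)) : E) = (y : F) :=
        congrArg Subtype.val (eqv.apply_symm_apply y)
      rw [Subtype.dist_eq, Subtype.dist_eq, ← hx, ← hy]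
      exact hglo _ _
    exact (LipschitzWith.of_dist_le_mul (K := L.toNNReal) (fun a b => by
      rw [Real.coe_toNNReal L hL0.le]; exact key a b)).continuous
  exact ⟨{ toEquiv := eqv, continuous_toFun := hcont1, continuous_invFun := hcont2 }⟩


lemma measure_closedBall_large {G : Type*} [MetricSpace G] [MeasurableSpace G]
    (μ : Measure G) [IsProbabilityMeasure μ] (p : G) :
    ∃ R : ℕ, 3/4 < (μ (Metric.closedBall p R)).toReal := by
  have hU : ⋃ R : ℕ, Metric.closedBall p R = univ := by
    ext w
    simp only [mem_iUnion, Metric.mem_closedBall, mem_univ, iff_true]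
    exact ⟨⌈dist w p⌉₊, Nat.le_ceil _⟩
  have h1 : Tendsto (fun R : ℕ => μ (Metric.closedBall p R)) atTop (𝓝 1) := by
    have := tendsto_measure_iUnion_atTop (μ := μ)
      (s := fun R : ℕ => Metric.closedBall p R)
      (fun a b hab => Metric.closedBall_subset_closedBall (by exact_mod_cast hab))
    rwa [hU, measure_univ] at this
  have h2 : Tendsto (fun R : ℕ => (μ (Metric.closedBall p R)).toReal) atTop (𝓝 1) := by
    have := (ENNReal.tendsto_toReal one_ne_top).comp h1
    exact this
  exact (h2.eventually (eventually_gt_nhds (by norm_num))).exists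

lemma exists_homeo (PZ : Measure E) (PX0 : Measure F)
    [IsProbabilityMeasure PZ] [IsProbabilityMeasure PX0]
    {L : ℝ} (hL : 1 ≤ L) (f : ℕ → E → F)
    (hup : ∀ n a b, dist (f n a) (f n b) ≤ L * dist a b)
    (hlo : ∀ n a b, dist a b ≤ L * dist (f n a) (f n b))
    (hconv : ∀ h : BoundedContinuousFunction F ℝ,
      Tendsto (fun n => ∫ z, h (f n z) ∂PZ) atTop (𝓝 (∫ x, h x ∂PX0))) :
    Nonempty (↥(msupp PZ) ≃ₜ ↥(msupp PX0)) := by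
  have hL0 : (0:ℝ) < L := one_pos.trans_le hL
  have hcont : ∀ n, Continuous (f n) := fun n =>
    (LipschitzWith.of_dist_le_mul (K := L.toNNReal) (fun a b => by
      rw [Real.coe_toNNReal L hL0.le]; exact hup n a b)).continuous
  obtain ⟨z₀, hz₀⟩ := msupp_nonempty PZ
  have x₀ : F := Classical.arbitrary F
  obtain ⟨R, hR⟩ := measure_closedBall_large PX0 x₀
  obtain ⟨T, hT⟩ := measure_closedBall_large PZ z₀
  -- test function
  set hf : F → ℝ := fun x => max (1 - Metric.infDist x (Metric.closedBall x₀ R)) 0 with hhf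
  have hfc : Continuous hf :=
    (continuous_const.sub (Metric.continuous_infDist_pt _)).max continuous_const
  have hf0 : ∀ x, 0 ≤ hf x := fun x => le_max_right _ _
  have hf1 : ∀ x, hf x ≤ 1 := fun x =>
    max_le (by linarith [Metric.infDist_nonneg (s := Metric.closedBall x₀ R) (x := x)])
      one_pos.le
  set h₀ : BoundedContinuousFunction F ℝ := BoundedContinuousFunction.ofNormedAddCommGroup
    hf hfc 1 (fun x => by
      rw [Real.norm_eq_abs, abs_of_nonneg (hf0 x)]; exact hf1 x) with hh₀
  have h₀app : ∀ x, h₀ x = hf x := fun x => rfl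
  have hballne : (Metric.closedBall x₀ (R:ℝ)).Nonempty :=
    ⟨x₀, Metric.mem_closedBall_self (by positivity)⟩
  have hfone : ∀ x ∈ Metric.closedBall x₀ (R:ℝ), hf x = 1 := by
    intro x hx
    rw [hhf]
    simp only [Metric.infDist_zero_of_mem hx, sub_zero]
    exact max_eq_left one_pos.le
  have hfzero : ∀ x, x ∉ Metric.closedBall x₀ ((R:ℝ)+1) → hf x = 0 := by
    intro x hx
    have hge : (1:ℝ) ≤ Metric.infDist x (Metric.closedBall x₀ R) := by
      by_contra hlt
      push_neg at hlt
      obtain ⟨y, hy, hxy⟩ := (Metric.infDist_lt_iff hballne).mp hlt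
      rw [Metric.mem_closedBall, not_le] at hx
      rw [Metric.mem_closedBall] at hy
      linarith [dist_triangle x y x₀]
    rw [hhf]
    exact max_eq_right (by linarith)
  -- lower bound at the limit
  have hlb : (PX0 (Metric.closedBall x₀ R)).toReal ≤ ∫ x, h₀ x ∂PX0 := by
    change PX0.real (Metric.closedBall x₀ R) ≤ _
    rw [← MeasureTheory.integral_indicator_one measurableSet_closedBall]
    apply integral_mono ((integrable_const (1:ℝ)).indicator measurableSet_closedBall)
      (h₀.integrable PX0)
    intro x
    by_cases hx : x ∈ Metric.closedBall x₀ (R:ℝ)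
    · rw [Set.indicator_of_mem hx, h₀app, hfone x hx]
    · rw [Set.indicator_of_notMem hx]
      exact hf0 x
  -- upper bound for each n
  have hub : ∀ n, ∫ z, h₀ (f n z) ∂PZ ≤
      (PZ ((f n) ⁻¹' Metric.closedBall x₀ ((R:ℝ)+1))).toReal := by
    intro n
    change _ ≤ PZ.real _
    rw [← MeasureTheory.integral_indicator_one ((hcont n).measurable measurableSet_closedBall)]
    apply integral_mono ((h₀.compContinuous ⟨f n, hcont n⟩).integrable PZ)
      ((integrable_const (1:ℝ)).indicator ((hcont n).measurable measurableSet_closedBall))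
    intro z
    have happ : (h₀.compContinuous ⟨f n, hcont n⟩) z = hf (f n z) := rfl
    by_cases hz : z ∈ f n ⁻¹' Metric.closedBall x₀ ((R:ℝ)+1)
    · rw [Set.indicator_of_mem hz, happ]
      exact hf1 _
    · rw [Set.indicator_of_notMem hz, happ, hfzero _ hz]
  -- eventually the preimage has large measure
  have hev : ∀ᶠ n in atTop, 1/4 < (PZ ((f n) ⁻¹' Metric.closedBall x₀ ((R:ℝ)+1))).toReal := by
    have hlim := hconv h₀
    have h14 : (1/4:ℝ) < ∫ x, h₀ x ∂PX0 := by
      have : (1/4:ℝ) < 3/4 := by norm_num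
      linarith [hR, hlb]
    filter_upwards [hlim.eventually (eventually_gt_nhds h14)] with n hn
    exact lt_of_lt_of_le hn (hub n)
  -- pointwise bound for f n z₀, eventually
  have hevbd : ∀ᶠ n in atTop, dist (f n z₀) x₀ ≤ L*T + R + 1 := by
    filter_upwards [hev] with n hn
    set A := (f n) ⁻¹' Metric.closedBall x₀ ((R:ℝ)+1) with hA
    have hABne : (A ∩ Metric.closedBall z₀ T).Nonempty := by
      by_contra hcon
      rw [not_nonempty_iff_eq_empty] at hcon
      have hdisj : Disjoint A (Metric.closedBall z₀ T) := disjoint_iff_inter_eq_empty.mpr hcon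
      have hsum : PZ A + PZ (Metric.closedBall z₀ T) = PZ (A ∪ Metric.closedBall z₀ T) :=
        (measure_union hdisj measurableSet_closedBall).symm
      have hle1 : PZ (A ∪ Metric.closedBall z₀ T) ≤ 1 := prob_le_one
      have h1 : (PZ (A ∪ Metric.closedBall z₀ T)).toReal ≤ 1 := by
        rw [← ENNReal.toReal_one]
        exact ENNReal.toReal_mono one_ne_top hle1
      have h2 : (PZ A).toReal + (PZ (Metric.closedBall z₀ T)).toReal =
          (PZ (A ∪ Metric.closedBall z₀ T)).toReal := by
        rw [← hsum, ENNReal.toReal_add (measure_ne_top _ _) (measure_ne_top _ _)]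
      linarith
    obtain ⟨z, hzA, hzB⟩ := hABne
    have h1 : dist (f n z) x₀ ≤ (R:ℝ)+1 := hzA
    have h2 : dist z z₀ ≤ T := hzB
    calc dist (f n z₀) x₀ ≤ dist (f n z₀) (f n z) + dist (f n z) x₀ := dist_triangle _ _ _
      _ ≤ L * dist z₀ z + ((R:ℝ)+1) := add_le_add (hup n z₀ z) h1
      _ ≤ L*T + R + 1 := by
          rw [dist_comm]
          nlinarith [dist_nonneg (x := z) (y := z₀)]
  obtain ⟨N, hN⟩ := eventually_atTop.mp hevbd
  -- shifted sequence
  apply exists_homeo_of_bound PZ PX0 (B := L*T + R + 1) hL z₀ x₀ (fun n => f (n + N))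
    (fun n => hup (n + N)) (fun n => hlo (n + N))
    (fun h => (hconv h).comp (tendsto_add_atTop_nat N))
  intro n z
  calc dist (f (n+N) z) x₀ ≤ dist (f (n+N) z) (f (n+N) z₀) + dist (f (n+N) z₀) x₀ :=
        dist_triangle _ _ _
    _ ≤ L * dist z z₀ + (L*T + R + 1) := add_le_add (hup _ _ _) (hN _ (Nat.le_add_left N n))
    _ = (L*T + R + 1) + L * dist z z₀ := by ring

end Stmt8Aux

/-- If the target is close (in a metric `ρ` for the weak topology) to a measure whose support
is not homeomorphic to that of the prior, and the pushforward model is close to the target,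
then the bi-Lipschitz constant of the pushforward map is bounded below by a quantity
`M ε` which diverges as `ε → 0`. -/
theorem stmt8 {dZ dX : ℕ}
    (PZ : Measure (EuclideanSpace ℝ (Fin dZ)))
    (PX0 : Measure (EuclideanSpace ℝ (Fin dX)))
    [IsProbabilityMeasure PZ] [IsProbabilityMeasure PX0]
    (hne : ¬ Nonempty (↥(msupp PZ) ≃ₜ ↥(msupp PX0)))
    (ρ : Measure (EuclideanSpace ℝ (Fin dX)) → Measure (EuclideanSpace ℝ (Fin dX)) → ℝ)
    (hρ_nonneg : ∀ μ ν, 0 ≤ ρ μ ν)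
    (hρ_symm : ∀ μ ν, ρ μ ν = ρ ν μ)
    (hρ_tri : ∀ μ ν ξ, ρ μ ξ ≤ ρ μ ν + ρ ν ξ)
    (hρ_weak : ∀ (μ : ℕ → Measure (EuclideanSpace ℝ (Fin dX)))
        (ν : Measure (EuclideanSpace ℝ (Fin dX))),
        (∀ n, IsProbabilityMeasure (μ n)) → IsProbabilityMeasure ν →
        (Tendsto (fun n => ρ (μ n) ν) atTop (nhds 0) ↔
          ∀ h : BoundedContinuousFunction (EuclideanSpace ℝ (Fin dX)) ℝ,
            Tendsto (fun n => ∫ x, h x ∂(μ n)) atTop (nhds (∫ x, h x ∂ν)))) :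
    ∃ M : ℝ → ℝ≥0∞,
      AntitoneOn M (Set.Ici 0) ∧
      (∀ ε : ℝ, 0 ≤ ε → 1 ≤ M ε) ∧
      Tendsto M (nhdsWithin 0 (Set.Ioi 0)) (nhds ⊤) ∧
      ∀ ε : ℝ, 0 ≤ ε → ∀ PXstar : Measure (EuclideanSpace ℝ (Fin dX)),
        IsProbabilityMeasure PXstar →
        ∀ f : EuclideanSpace ℝ (Fin dZ) → EuclideanSpace ℝ (Fin dX), Measurable f →
        ρ PXstar PX0 ≤ ε → ρ (PZ.map f) PXstar ≤ ε → M ε ≤ eBiLip f := by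
  classical
  set A : ℝ → Set (EuclideanSpace ℝ (Fin dZ) → EuclideanSpace ℝ (Fin dX)) := fun ε =>
    {f | Measurable f ∧ ∃ Q : Measure (EuclideanSpace ℝ (Fin dX)), IsProbabilityMeasure Q ∧
      ρ Q PX0 ≤ ε ∧ ρ (PZ.map f) Q ≤ ε} with hA
  set M : ℝ → ℝ≥0∞ := fun ε => ⨅ f ∈ A ε, eBiLip f with hM
  have key : ∀ C : ℝ≥0∞, 1 ≤ C → C ≠ ⊤ → ∃ ε > (0:ℝ), ∀ f ∈ A ε, C ≤ eBiLip f := by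
    intro C hC1 hCt
    by_contra hcon
    push_neg at hcon
    have hsel : ∀ n : ℕ, ∃ f, f ∈ A (1/(n+1)) ∧ eBiLip f < C := by
      intro n
      obtain ⟨f, hf1, hf2⟩ := hcon (1/(n+1)) (by positivity)
      exact ⟨f, hf1, hf2⟩
    choose fs hfsA hfsC using hsel
    have hmeas : ∀ n, Measurable (fs n) := fun n => (hfsA n).1
    have hmapprob : ∀ n, IsProbabilityMeasure (PZ.map (fs n)) := fun n =>
      Measure.isProbabilityMeasure_map (hmeas n).aemeasurable
    have hρ2 : ∀ n : ℕ, ρ (PZ.map (fs n)) PX0 ≤ 2/(n+1) := by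
      intro n
      obtain ⟨-, Q, hQp, hQ1, hQ2⟩ := hfsA n
      calc ρ (PZ.map (fs n)) PX0 ≤ ρ (PZ.map (fs n)) Q + ρ Q PX0 := hρ_tri _ _ _
        _ ≤ 1/(n+1) + 1/(n+1) := add_le_add hQ2 hQ1
        _ = 2/(n+1) := by ring
    have hρ0 : Tendsto (fun n => ρ (PZ.map (fs n)) PX0) atTop (𝓝 0) := by
      apply squeeze_zero (fun n => hρ_nonneg _ _) hρ2
      have h2 := tendsto_one_div_add_atTop_nhds_zero_nat.const_mul (2:ℝ)
      simpa [mul_one_div, div_eq_mul_inv] using h2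
    have hweak := (hρ_weak (fun n => PZ.map (fs n)) PX0 hmapprob inferInstance).mp hρ0
    set L : ℝ := C.toReal with hLdef
    have hL1 : 1 ≤ L := by
      rw [hLdef, ← ENNReal.toReal_one]
      exact ENNReal.toReal_mono hCt hC1
    have hup : ∀ n a b, dist (fs n a) (fs n b) ≤ L * dist a b := by
      intro n a b
      have h2 := (Stmt8Aux.biLip_of_lt (hfsC n) a b).2
      have h3 := ENNReal.toReal_mono (ENNReal.mul_ne_top hCt (edist_ne_top a b)) h2
      rwa [ENNReal.toReal_mul, ← dist_edist, ← dist_edist] at h3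
    have hlo : ∀ n a b, dist a b ≤ L * dist (fs n a) (fs n b) := by
      intro n a b
      have h2 := (Stmt8Aux.biLip_of_lt (hfsC n) a b).1
      have h3 := ENNReal.toReal_mono (ENNReal.mul_ne_top hCt (edist_ne_top _ _)) h2
      rwa [ENNReal.toReal_mul, ← dist_edist, ← dist_edist] at h3
    have hconv : ∀ h : BoundedContinuousFunction (EuclideanSpace ℝ (Fin dX)) ℝ,
        Tendsto (fun n => ∫ z, h (fs n z) ∂PZ) atTop (𝓝 (∫ x, h x ∂PX0)) := by
      intro h
      have ht := hweak h
      have heq : ∀ n, ∫ x, h x ∂(PZ.map (fs n)) = ∫ z, h (fs n z) ∂PZ := fun n =>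
        integral_map (hmeas n).aemeasurable h.continuous.aestronglyMeasurable
      simpa only [heq] using ht
    exact hne (Stmt8Aux.exists_homeo PZ PX0 hL1 fs hup hlo hconv)
  have hanti : AntitoneOn M (Set.Ici 0) := by
    intro a _ b _ hab
    refine le_iInf₂ fun f hf => iInf₂_le f ?_
    obtain ⟨hfm, Q, hQp, h1, h2⟩ := hf
    exact ⟨hfm, Q, hQp, h1.trans hab, h2.trans hab⟩
  have hone : ∀ ε : ℝ, 0 ≤ ε → 1 ≤ M ε := fun ε _ =>
    le_iInf₂ fun f _ => Stmt8Aux.one_le_eBiLip f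
  have htop : Tendsto M (nhdsWithin 0 (Set.Ioi 0)) (nhds ⊤) := by
    rw [ENNReal.tendsto_nhds_top_iff_nnreal]
    intro b
    obtain ⟨ε, hε, hkey⟩ := key ((b : ℝ≥0∞) + 1) le_add_self
      (by simp [ENNReal.add_eq_top])
    have hev : Set.Ioc 0 ε ∈ nhdsWithin (0:ℝ) (Set.Ioi 0) :=
      Ioc_mem_nhdsGT_of_mem ⟨le_refl 0, hε⟩
    filter_upwards [hev] with x hx
    have h1 : (b : ℝ≥0∞) + 1 ≤ M ε := le_iInf₂ fun f hf => hkey f hf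
    have h2 : M ε ≤ M x := hanti (Set.mem_Ici.mpr hx.1.le) (Set.mem_Ici.mpr (hx.1.le.trans hx.2))
      hx.2
    calc (b : ℝ≥0∞) < (b : ℝ≥0∞) + 1 := ENNReal.lt_add_right coe_ne_top one_ne_zero
      _ ≤ M ε := h1
      _ ≤ M x := h2
  refine ⟨M, hanti, hone, htop, ?_⟩
  intro ε hε PXstar hPXs f hf h1 h2
  exact iInf₂_le f ⟨hf, PXstar, hPXs, h1, h2⟩



end
end

section
/- For |b| > 1, the limit as n → ∞ of (n / bⁿ) · Σ_{j=1}^{n−1} bʲ/j exists and equals 1/(b−1). -/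
open Filter

/-- For `|b| > 1`, `(n / bⁿ) · Σ_{j=1}^{n−1} bʲ/j → 1/(b−1)` as `n → ∞`. -/
theorem stmt12 (b : ℝ) (hb : 1 < |b|) :
    Tendsto (fun n : ℕ => ((n : ℝ) / b ^ n) * ∑ j ∈ Finset.Ioo 0 n, b ^ j / (j : ℝ))
      atTop (nhds (1 / (b - 1))) := by
  have hb0 : b ≠ 0 := by
    intro h; rw [h] at hb; norm_num at hb
  have hr : |b⁻¹| < 1 := by
    rw [abs_inv]
    exact inv_lt_one_of_one_lt₀ hb
  set F : ℕ → ℕ → ℝ := fun n k =>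
    if k + 1 < n then (n : ℝ) / ((n - (k + 1) : ℕ) : ℝ) * (b⁻¹) ^ (k + 1) else 0 with hF
  have key : ∀ n : ℕ, ((n : ℝ) / b ^ n) * ∑ j ∈ Finset.Ioo 0 n, b ^ j / (j : ℝ)
      = ∑' k, F n k := by
    intro n
    rw [tsum_eq_sum (s := Finset.range (n - 1)) (by
      intro k hk
      simp only [Finset.mem_range, not_lt] at hk
      simp only [hF]
      rw [if_neg]
      omega)]
    rw [Finset.mul_sum]
    have h1 : Finset.Ioo 0 n = Finset.Ico 1 n := rfl
    rw [h1, Finset.sum_Ico_eq_sum_range]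
    rw [← Finset.sum_range_reflect]
    apply Finset.sum_congr rfl
    intro k hk
    simp only [Finset.mem_range] at hk
    have hk1 : k + 1 < n := by omega
    have e1 : 1 + (n - 1 - 1 - k) = n - (k + 1) := by omega
    rw [e1]
    simp only [hF, if_pos hk1]
    have hpow : b ^ (n - (k + 1)) = b ^ n * (b⁻¹) ^ (k + 1) := by
      rw [inv_pow, ← div_eq_mul_inv, eq_div_iff (pow_ne_zero _ hb0), ← pow_add]
      congr 1
      omega
    rw [hpow]
    have hbn : b ^ n ≠ 0 := pow_ne_zero _ hb0
    field_simp
  simp only [key]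
  have hb1 : b - 1 ≠ 0 := by
    intro h
    have : b = 1 := by linarith
    rw [this] at hb; norm_num at hb
  have hinv : (1 : ℝ) - b⁻¹ ≠ 0 := by
    intro h
    have : b⁻¹ = 1 := by linarith
    have : b = 1 := by
      field_simp at this; linarith
    rw [this] at hb; norm_num at hb
  have htsum : (1 : ℝ) / (b - 1) = ∑' k : ℕ, (b⁻¹) ^ (k + 1) := by
    have : ∀ k : ℕ, (b⁻¹) ^ (k + 1) = b⁻¹ * (b⁻¹) ^ k := fun k => pow_succ' _ _
    simp only [this]
    rw [tsum_mul_left, tsum_geometric_of_norm_lt_one (by rwa [Real.norm_eq_abs])]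
    field_simp
  rw [htsum]
  apply tendsto_tsum_of_dominated_convergence
    (bound := fun k : ℕ => ((k : ℝ) + 2) * |b⁻¹| ^ (k + 1))
  · -- summability of the bound
    have h1 : Summable (fun k : ℕ => (k : ℝ) * |b⁻¹| ^ k) := by
      simpa using summable_pow_mul_geometric_of_norm_lt_one 1
        (r := |b⁻¹|) (by rwa [Real.norm_eq_abs, abs_abs])
    have h2 : Summable (fun k : ℕ => (2 : ℝ) * |b⁻¹| ^ k) :=
      (summable_geometric_of_lt_one (abs_nonneg _) hr).mul_left 2
    have h3 : Summable (fun k : ℕ => ((k : ℝ) + 2) * |b⁻¹| ^ k) := by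
      simpa [add_mul] using h1.add h2
    have := h3.mul_left |b⁻¹|
    apply this.congr
    intro k
    rw [pow_succ']
    ring
  · -- pointwise limit
    intro k
    have hlim : Tendsto (fun n : ℕ => (n : ℝ) / ((n - (k + 1) : ℕ) : ℝ)) atTop (nhds 1) := by
      have h0 : Tendsto (fun n : ℕ => ((k : ℝ) + 1) / ((n : ℝ) - (k + 1))) atTop (nhds 0) := by
        apply Tendsto.div_atTop tendsto_const_nhds
        apply tendsto_atTop_add_const_right
        exact tendsto_natCast_atTop_atTop
      have h1 : Tendsto (fun n : ℕ => 1 + ((k : ℝ) + 1) / ((n : ℝ) - (k + 1))) atTop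
          (nhds (1 + 0)) := tendsto_const_nhds.add h0
      rw [add_zero] at h1
      apply h1.congr'
      filter_upwards [eventually_ge_atTop (k + 2)] with n hn
      have hcast : ((n - (k + 1) : ℕ) : ℝ) = (n : ℝ) - (k + 1) := by
        push_cast [Nat.cast_sub (by omega : k + 1 ≤ n)]; ring
      have hne : (n : ℝ) - ((k : ℝ) + 1) ≠ 0 := by
        have : (k : ℝ) + 2 ≤ (n : ℝ) := by exact_mod_cast hn
        intro h; linarith
      rw [hcast]
      field_simp
      ring
    have : Tendsto (fun n : ℕ => (n : ℝ) / ((n - (k + 1) : ℕ) : ℝ) * (b⁻¹) ^ (k + 1)) atTop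
        (nhds (1 * (b⁻¹) ^ (k + 1))) := hlim.mul tendsto_const_nhds
    rw [one_mul] at this
    apply this.congr'
    filter_upwards [eventually_gt_atTop (k + 1)] with n hn
    simp only [hF, if_pos hn]
  · -- bound
    filter_upwards with n
    intro k
    simp only [hF]
    split_ifs with h
    · rw [Real.norm_eq_abs, abs_mul, abs_pow, abs_div]
      apply mul_le_mul_of_nonneg_right _ (pow_nonneg (abs_nonneg _) _)
      rw [abs_of_nonneg (Nat.cast_nonneg n), abs_of_nonneg (Nat.cast_nonneg _)]
      rw [div_le_iff₀ (by exact_mod_cast Nat.sub_pos_of_lt h)]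
      have : (n : ℕ) ≤ (k + 2) * (n - (k + 1)) := by
        have hm : 1 ≤ n - (k + 1) := by omega
        nlinarith [Nat.sub_add_cancel (by omega : k + 1 ≤ n)]
      calc (n : ℝ) ≤ ((k + 2) * (n - (k + 1)) : ℕ) := by exact_mod_cast this
        _ = ((k : ℝ) + 2) * ((n - (k + 1) : ℕ) : ℝ) := by push_cast; ring
    · simp [Real.norm_eq_abs]
      positivity
end

section
/- Let g : ℝ → ℝ be differentiable with |g'| bounded by κ < 1, let N be an ℕ-valued random variable with support all of ℕ, and let p_j = P(N ≥ j). Then the Russian roulette estimator S_N(x) = Σ_{j=1}^N [(−1)^{j+1}/j] (g'(x))^j / p_j has finite expectation, equal to Σ_{j=1}^∞ [(−1)^{j+1}/j] (g'(x))^j = log(1 + g'(x)). -/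
open MeasureTheory Filter
open scoped ENNReal NNReal

/-- The Russian roulette estimator `S_N(x) = Σ_{j=1}^N [(−1)^{j+1}/j] (g'(x))^j / p_j`, where
`p_j = P(N ≥ j) > 0` and `|g'| ≤ κ < 1`, has finite expectation equal to
`Σ_{j=1}^∞ [(−1)^{j+1}/j] (g'(x))^j = log(1 + g'(x))`. -/
theorem stmt13 {Ω : Type*} [MeasurableSpace Ω] (μ : Measure Ω) [IsProbabilityMeasure μ]
    (N : Ω → ℕ) (hN : Measurable N) (hN1 : ∀ ω, 1 ≤ N ω)
    (hsupp : ∀ n : ℕ, 1 ≤ n → 0 < μ {ω | N ω = n})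
    (g : ℝ → ℝ) (hg : Differentiable ℝ g) (κ : ℝ) (hκ : κ < 1)
    (hgκ : ∀ y, |deriv g y| ≤ κ) (x : ℝ) :
    Integrable (fun ω => ∑ j ∈ Finset.Icc 1 (N ω),
        ((-1 : ℝ) ^ (j + 1) / (j : ℝ)) * (deriv g x) ^ j / (μ {ω' | j ≤ N ω'}).toReal) μ ∧
    ∫ ω, (∑ j ∈ Finset.Icc 1 (N ω),
        ((-1 : ℝ) ^ (j + 1) / (j : ℝ)) * (deriv g x) ^ j / (μ {ω' | j ≤ N ω'}).toReal) ∂μ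
      = ∑' j : ℕ, ((-1 : ℝ) ^ (j + 2) / ((j : ℝ) + 1)) * (deriv g x) ^ (j + 1) ∧
    (∑' j : ℕ, ((-1 : ℝ) ^ (j + 2) / ((j : ℝ) + 1)) * (deriv g x) ^ (j + 1))
      = Real.log (1 + deriv g x) := by
  classical
  set c := deriv g x with hc_def
  have hc : |c| ≤ κ := hgκ x
  have hκ0 : 0 ≤ κ := (abs_nonneg _).trans hc
  -- notation
  set p : ℕ → ℝ := fun j => (μ {ω' | j ≤ N ω'}).toReal with hp_def
  set b : ℕ → ℝ := fun j => ((-1 : ℝ) ^ (j + 1) / (j : ℝ)) * c ^ j / p j with hb_def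
  have hmeas : ∀ j : ℕ, MeasurableSet {ω' : Ω | j ≤ N ω'} := fun j =>
    hN (measurableSet_Ici : MeasurableSet (Set.Ici j))
  have hfin : ∀ j : ℕ, μ {ω' | j ≤ N ω'} ≠ ⊤ := fun j => measure_ne_top μ _
  have hpos : ∀ j : ℕ, 1 ≤ j → 0 < p j := by
    intro j hj
    have h1 : μ {ω | N ω = j} ≤ μ {ω' | j ≤ N ω'} :=
      measure_mono (fun ω h => le_of_eq h.symm)
    exact ENNReal.toReal_pos (ne_of_gt (lt_of_lt_of_le (hsupp j hj) h1)) (hfin j)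
  -- the indicator functions
  set F : ℕ → Ω → ℝ := fun j ω =>
    Set.indicator {ω' : Ω | (j + 1) ≤ N ω'} (fun _ => b (j + 1)) ω with hF_def
  have hFmeas : ∀ j, AEStronglyMeasurable (F j) μ := fun j =>
    (stronglyMeasurable_const.indicator (hmeas (j + 1))).aestronglyMeasurable
  -- pointwise identity: the finite sum equals a tsum of indicators
  have hsum : ∀ ω : Ω, (∑ j ∈ Finset.Icc 1 (N ω), b j) = ∑' j : ℕ, F j ω := by
    intro ω
    have h0 : ∀ j ∉ Finset.range (N ω), F j ω = 0 := by
      intro j hj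
      simp only [Finset.mem_range, not_lt] at hj
      have : ω ∉ {ω' : Ω | (j + 1) ≤ N ω'} := by
        simp only [Set.mem_setOf_eq, not_le]; omega
      simp only [hF_def]; exact Set.indicator_of_notMem this _
    rw [tsum_eq_sum h0]
    rw [← Finset.Ico_add_one_right_eq_Icc, Finset.sum_Ico_eq_sum_range]
    apply Finset.sum_congr (by simp) -- range (N ω + 1 - 1) = range (N ω)
    intro j hj
    simp only [Finset.mem_range] at hj
    have hωmem : ω ∈ {ω' : Ω | (j + 1) ≤ N ω'} := by
      simp only [Set.mem_setOf_eq]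
      omega
    simp only [hF_def, Set.indicator_of_mem hωmem, add_comm 1 j]
  -- L1 norms of the indicators
  have hlint : ∀ j : ℕ, (∫⁻ ω, ‖F j ω‖₊ ∂μ) = ENNReal.ofReal (|b (j + 1)| * p (j + 1)) := by
    intro j
    have : (fun ω => (‖F j ω‖₊ : ℝ≥0∞)) =
        fun ω => Set.indicator ({ω' : Ω | (j + 1) ≤ N ω'})
          (fun _ => (‖b (j + 1)‖₊ : ℝ≥0∞)) ω := by
      funext ω
      by_cases h : ω ∈ {ω' : Ω | (j + 1) ≤ N ω'} <;>
        simp only [hF_def, Set.indicator, h, ↓reduceIte, nnnorm_zero, ENNReal.coe_zero]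
    rw [this, lintegral_indicator_const (hmeas (j + 1))]
    rw [ENNReal.ofReal_mul (abs_nonneg _)]
    congr 1
    · exact Real.enorm_eq_ofReal_abs _
    · exact (ENNReal.ofReal_toReal (hfin (j + 1))).symm
  -- bound on the L1 norms
  have hbnd : ∀ j : ℕ, |b (j + 1)| * p (j + 1) ≤ κ ^ (j + 1) := by
    intro j
    have hp1 : 0 < p (j + 1) := hpos (j + 1) (by omega)
    have : |b (j + 1)| = |((-1 : ℝ) ^ (j + 2) / ((j : ℕ) + 1 : ℕ)) * c ^ (j + 1)| / p (j + 1) := by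
      rw [hb_def]
      rw [abs_div, abs_of_pos hp1]
    rw [this, div_mul_cancel₀ _ (ne_of_gt hp1)]
    have h1 : |((-1 : ℝ) ^ (j + 2) / ((j : ℕ) + 1 : ℕ)) * c ^ (j + 1)| ≤ |c| ^ (j + 1) := by
      rw [abs_mul, abs_pow]
      have h2 : |((-1 : ℝ) ^ (j + 2) / ((j : ℕ) + 1 : ℕ))| ≤ 1 := by
        rw [abs_div, abs_pow, abs_neg, abs_one, one_pow, Nat.abs_cast]
        rw [div_le_one (by positivity)]
        exact_mod_cast Nat.one_le_iff_ne_zero.mpr (by omega)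
      calc |((-1 : ℝ) ^ (j + 2) / ((j : ℕ) + 1 : ℕ))| * |c| ^ (j + 1)
          ≤ 1 * |c| ^ (j + 1) := by
            apply mul_le_mul_of_nonneg_right h2 (by positivity)
        _ = |c| ^ (j + 1) := one_mul _
    exact h1.trans (pow_le_pow_left₀ (abs_nonneg _) hc _)
  have hsummable : Summable (fun j : ℕ => κ ^ (j + 1)) :=
    (summable_geometric_of_lt_one hκ0 hκ).comp_injective (add_left_injective 1)
  have hnonneg : ∀ j : ℕ, 0 ≤ |b (j + 1)| * p (j + 1) := by
    intro j
    exact mul_nonneg (abs_nonneg _) (le_of_lt (hpos (j + 1) (by omega)))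
  have hsummable' : Summable (fun j : ℕ => |b (j + 1)| * p (j + 1)) :=
    Summable.of_nonneg_of_le hnonneg hbnd hsummable
  have hlintsum : (∑' j : ℕ, ∫⁻ ω, ‖F j ω‖₊ ∂μ) ≠ ⊤ := by
    have : (∑' j : ℕ, ∫⁻ ω, ‖F j ω‖₊ ∂μ)
        = ENNReal.ofReal (∑' j : ℕ, |b (j + 1)| * p (j + 1)) := by
      rw [ENNReal.ofReal_tsum_of_nonneg hnonneg hsummable']
      exact tsum_congr hlint
    rw [this]
    exact ENNReal.ofReal_ne_top
  -- integrability
  have hintb : Integrable (fun ω => ∑ j ∈ Finset.Icc 1 (N ω), b j) μ := by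
    constructor
    · have : Measurable (fun ω => ∑ j ∈ Finset.Icc 1 (N ω), b j) :=
        (measurable_from_nat (f := fun n => ∑ j ∈ Finset.Icc 1 n, b j)).comp hN
      exact this.aestronglyMeasurable
    · show (∫⁻ ω, (‖∑ j ∈ Finset.Icc 1 (N ω), b j‖₊ : ℝ≥0∞) ∂μ) < ⊤
      calc ∫⁻ ω, ‖∑ j ∈ Finset.Icc 1 (N ω), b j‖₊ ∂μ
          ≤ ∫⁻ ω, ∑' j : ℕ, (‖F j ω‖₊ : ℝ≥0∞) ∂μ := by
            apply lintegral_mono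
            intro ω
            show (‖∑ j ∈ Finset.Icc 1 (N ω), b j‖₊ : ℝ≥0∞) ≤ ∑' j : ℕ, (‖F j ω‖₊ : ℝ≥0∞)
            rw [hsum ω, tsum_eq_sum (s := Finset.range (N ω))]
            · calc (‖∑ j ∈ Finset.range (N ω), F j ω‖₊ : ℝ≥0∞)
                  ≤ ∑ j ∈ Finset.range (N ω), (‖F j ω‖₊ : ℝ≥0∞) := by
                    push_cast
                    exact_mod_cast nnnorm_sum_le _ _
                _ ≤ ∑' j : ℕ, (‖F j ω‖₊ : ℝ≥0∞) := ENNReal.sum_le_tsum _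
            · intro j hj
              simp only [Finset.mem_range, not_lt] at hj
              have : ω ∉ {ω' : Ω | (j + 1) ≤ N ω'} := by
                simp only [Set.mem_setOf_eq, not_le]; omega
              simp only [hF_def]; exact Set.indicator_of_notMem this _
        _ = ∑' j : ℕ, ∫⁻ ω, ‖F j ω‖₊ ∂μ :=
            lintegral_tsum (fun j => ((hFmeas j).enorm))
        _ < ⊤ := lt_top_iff_ne_top.2 hlintsum
  -- the value of each integral
  have hintF : ∀ j : ℕ, (∫ ω, F j ω ∂μ)
      = ((-1 : ℝ) ^ (j + 2) / ((j : ℝ) + 1)) * c ^ (j + 1) := by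
    intro j
    rw [hF_def]
    rw [integral_indicator_const _ (hmeas (j + 1))]
    have hp1 : p (j + 1) ≠ 0 := ne_of_gt (hpos (j + 1) (by omega))
    rw [smul_eq_mul, hb_def]
    simp only
    rw [mul_comm, measureReal_def, div_mul_cancel₀ _ hp1]
    push_cast
    ring_nf
  -- the expectation
  have hint_eq : (∫ ω, ∑ j ∈ Finset.Icc 1 (N ω), b j ∂μ)
      = ∑' j : ℕ, ((-1 : ℝ) ^ (j + 2) / ((j : ℝ) + 1)) * c ^ (j + 1) := by
    have h1 : (fun ω => ∑ j ∈ Finset.Icc 1 (N ω), b j) = fun ω => ∑' j : ℕ, F j ω :=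
      funext hsum
    rw [h1, integral_tsum hFmeas hlintsum]
    exact tsum_congr hintF
  -- the log identity
  have hlog : (∑' j : ℕ, ((-1 : ℝ) ^ (j + 2) / ((j : ℝ) + 1)) * c ^ (j + 1))
      = Real.log (1 + c) := by
    have habs : |(-c)| < 1 := by rw [abs_neg]; exact lt_of_le_of_lt hc hκ
    have h := Real.hasSum_pow_div_log_of_abs_lt_one habs
    rw [sub_neg_eq_add] at h
    have h2 : HasSum (fun n : ℕ => ((-1 : ℝ) ^ (n + 2) / ((n : ℝ) + 1)) * c ^ (n + 1))
        (Real.log (1 + c)) := by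
      have := h.neg
      rw [neg_neg] at this
      have e : (fun n : ℕ => ((-1 : ℝ) ^ (n + 2) / ((n : ℝ) + 1)) * c ^ (n + 1))
          = fun n : ℕ => -((-c) ^ (n + 1) / ((n : ℝ) + 1)) := by
        funext n
        rw [neg_pow c (n + 1), pow_succ (-1 : ℝ) (n + 1)]
        ring
      rw [e]; exact this
    exact h2.tsum_eq
  exact ⟨hintb, hint_eq, hlog⟩
end

section
/- Let N ~ Geometric(p) with p_j = P(N ≥ j) = (1−p)^{j−1}, and let g : ℝ → ℝ be continuously differentiable with Lipschitz constant κ satisfying 1 − p < κ² < 1. Then the set of x ∈ ℝ for which the Russian roulette estimator S_N(x) = Σ_{j=1}^N [(−1)^{j+1}/j](g'(x))^j/p_j has infinite variance has positive Lebesgue measure. -/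
open MeasureTheory Filter

/-- Growth lemma: `n^2 * (r⁻¹)^n → 0` for `r > 1`. -/
lemma stmt14_growth {r : ℝ} (hr : 1 < r) :
    Tendsto (fun n : ℕ => (n : ℝ) ^ 2 * (r⁻¹) ^ n) atTop (nhds 0) := by
  have hr' : ‖r⁻¹‖ < 1 := by
    rw [Real.norm_eq_abs, abs_of_nonneg (by positivity)]
    rw [inv_lt_one_iff₀]; right; exact hr
  have hs := summable_norm_pow_mul_geometric_of_norm_lt_one 2 hr'
  have := (Summable.of_norm hs).tendsto_atTop_zero
  exact this

set_option maxHeartbeats 1600000 in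
/-- Core lemma: if `(deriv)² > 1 - p` at `x`, the estimator has infinite variance. -/
lemma stmt14_core {Ω : Type*} [MeasurableSpace Ω] (μ : Measure Ω) [IsProbabilityMeasure μ]
    (p : ℝ) (hp0 : 0 < p) (hp1 : p < 1)
    (N : Ω → ℕ) (hN : Measurable N)
    (hgeom : ∀ j : ℕ, 1 ≤ j → μ {ω | j ≤ N ω} = ENNReal.ofReal ((1 - p) ^ (j - 1)))
    (a : ℝ) (ha : 1 - p < a ^ 2) :
    ProbabilityTheory.evariance
      (fun ω => ∑ j ∈ Finset.Icc 1 (N ω),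
        ((-1 : ℝ) ^ (j + 1) / (j : ℝ)) * a ^ j / ((1 - p) ^ (j - 1))) μ = ⊤ := by
  set q : ℝ := 1 - p with hq
  have hq0 : 0 < q := by simp [hq]; linarith
  have hq1 : q < 1 := by simp [hq]; linarith
  set c : ℕ → ℝ := fun j => ((-1 : ℝ) ^ (j + 1) / (j : ℝ)) * a ^ j / q ^ (j - 1) with hc
  set T : ℕ → ℝ := fun n => ∑ j ∈ Finset.Icc 1 n, c j with hT
  set S : Ω → ℝ := fun ω => T (N ω) with hS
  have hSmeas : Measurable S := by
    show Measurable fun ω => T (N ω)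
    exact (measurable_from_nat (f := T)).comp hN
  -- the law of N
  have hPn : ∀ n : ℕ, 1 ≤ n → μ {ω | N ω = n} = ENNReal.ofReal (p * q ^ (n - 1)) := by
    intro n hn
    have hu : {ω | n ≤ N ω} = {ω | N ω = n} ∪ {ω | n + 1 ≤ N ω} := by
      ext ω; simp only [Set.mem_setOf_eq, Set.mem_union]; omega
    have hdisj : Disjoint {ω | N ω = n} {ω | n + 1 ≤ N ω} := by
      rw [Set.disjoint_left]; intro ω h1 h2
      simp only [Set.mem_setOf_eq] at h1 h2; omega
    have hB : MeasurableSet {ω | n + 1 ≤ N ω} := hN measurableSet_Ici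
    have hsplit : μ {ω | n ≤ N ω} = μ {ω | N ω = n} + μ {ω | n + 1 ≤ N ω} := by
      rw [hu, measure_union hdisj hB]
    rw [hgeom n hn, hgeom (n + 1) (by omega)] at hsplit
    have hnn : (n + 1) - 1 = n := by omega
    rw [hnn] at hsplit
    have : μ {ω | N ω = n} = ENNReal.ofReal (q ^ (n - 1)) - ENNReal.ofReal (q ^ n) :=
      ENNReal.eq_sub_of_add_eq ENNReal.ofReal_ne_top hsplit.symm
    rw [this, ← ENNReal.ofReal_sub _ (by positivity)]
    congr 1
    have hn' : n - 1 + 1 = n := by omega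
    calc q ^ (n - 1) - q ^ n = q ^ (n - 1) - q ^ (n - 1) * q := by rw [← pow_succ, hn']
      _ = p * q ^ (n - 1) := by rw [hq]; ring
  -- lower bound on the second moment
  have hlow : ∀ n : ℕ, 1 ≤ n →
      ENNReal.ofReal (p * q ^ (n - 1) * (T n) ^ 2) ≤
        ∫⁻ ω, (‖S ω‖₊ : ENNReal) ^ 2 ∂μ := by
    intro n hn
    have hset : MeasurableSet {ω | N ω = n} := hN (measurableSet_singleton n)
    have hcongr : ∫⁻ ω in {ω | N ω = n}, (‖S ω‖₊ : ENNReal) ^ 2 ∂μ =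
        ∫⁻ _ω in {ω | N ω = n}, (‖T n‖₊ : ENNReal) ^ 2 ∂μ :=
      setLIntegral_congr_fun hset
        (fun ω (hω : N ω = n) => by simp only [hS, hω])
    have key : ENNReal.ofReal (p * q ^ (n - 1) * (T n) ^ 2) =
        ∫⁻ ω in {ω | N ω = n}, (‖S ω‖₊ : ENNReal) ^ 2 ∂μ := by
      rw [hcongr, setLIntegral_const, hPn n hn, mul_comm (p * q ^ (n - 1)) ((T n) ^ 2),
        ENNReal.ofReal_mul (by positivity)]
      congr 1
      rw [← enorm_eq_nnnorm, Real.enorm_eq_ofReal_abs, ← ENNReal.ofReal_pow (abs_nonneg _), sq_abs]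
    rw [key]
    exact setLIntegral_le_lintegral _ _
  -- growth of the lower bounds
  have hgrow : ∀ C : ℝ, 0 < C → ∃ k : ℕ, 1 ≤ k ∧ C ≤ p * q ^ (k - 1) * (T k) ^ 2 := by
    intro C hC
    set r : ℝ := a ^ 2 / q with hrdef
    have hr : 1 < r := (one_lt_div hq0).2 (by linarith)
    have hr0 : 0 < r := lt_trans one_pos hr
    have htend := stmt14_growth hr
    have heps : 0 < p * q / (4 * C) := by positivity
    obtain ⟨n₀, hn₀⟩ := (Metric.tendsto_atTop.1 htend) (p * q / (4 * C)) heps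
    set m : ℕ := max n₀ 1 with hm
    have hm1 : 1 ≤ m := le_max_right _ _
    have hmn : n₀ ≤ m + 1 := le_trans (le_max_left _ _) (Nat.le_succ m)
    have hsmall := hn₀ (m + 1) hmn
    rw [Real.dist_eq, sub_zero, abs_of_nonneg (by positivity)] at hsmall
    -- hsmall : ((m+1:ℕ):ℝ)^2 * (r⁻¹)^(m+1) < p*q/(4*C)
    have hM1 : (0 : ℝ) < ((m : ℝ) + 1) := by positivity
    have hrp : (0 : ℝ) < r ^ (m + 1) := by positivity
    push_cast at hsmall
    have hineq : 4 * C * ((m : ℝ) + 1) ^ 2 < p * q * r ^ (m + 1) := by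
      have h1 : ((m : ℝ) + 1) ^ 2 * (r⁻¹) ^ (m + 1) = ((m : ℝ) + 1) ^ 2 / r ^ (m + 1) := by
        rw [inv_pow]; ring
      rw [h1, div_lt_div_iff₀ hrp (by positivity)] at hsmall
      nlinarith [hsmall]
    -- key: lower bound on p * q^m * (c (m+1))^2
    have hms : (m + 1) - 1 = m := by omega
    have hsq : ((-1 : ℝ) ^ (m + 1 + 1)) ^ 2 = 1 := by
      rw [← pow_mul, mul_comm, pow_mul]; simp
    have hqm : q ^ m ≠ 0 := by positivity
    have hqm1 : q ^ (m + 1) ≠ 0 := by positivity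
    have hm0 : ((m : ℝ) + 1) ≠ 0 := by positivity
    have haa : (a ^ (m + 1)) ^ 2 = (a ^ 2) ^ (m + 1) := by
      rw [← pow_mul, ← pow_mul, mul_comm]
    have hc2 : (c (m + 1)) ^ 2 = (a ^ 2) ^ (m + 1) / (((m : ℝ) + 1) ^ 2 * (q ^ m) ^ 2) := by
      simp only [hc, hms]
      push_cast
      rw [div_pow, mul_pow, div_pow, hsq, haa]
      field_simp
    have hckey : p * q ^ m * (c (m + 1)) ^ 2 = p * q * r ^ (m + 1) / ((m : ℝ) + 1) ^ 2 := by
      rw [hc2, hrdef, div_pow]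
      rw [pow_succ q m]
      field_simp
    have hkey : 4 * C ≤ p * q ^ m * (c (m + 1)) ^ 2 := by
      rw [hckey]
      rw [le_div_iff₀ (by positivity)]
      nlinarith [hineq]
    -- c (m+1) = T (m+1) - T m
    have hTrec : T (m + 1) = T m + c (m + 1) := Finset.sum_Icc_succ_top (by omega) c
    have hcsq : (c (m + 1)) ^ 2 ≤ 2 * (T (m + 1)) ^ 2 + 2 * (T m) ^ 2 := by
      have : c (m + 1) = T (m + 1) - T m := by rw [hTrec]; ring
      rw [this]; nlinarith [sq_nonneg (T (m + 1) + T m)]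
    have hqmm : q ^ m ≤ q ^ (m - 1) := by
      have h1 : m - 1 + 1 = m := by omega
      calc q ^ m = q ^ (m - 1) * q := by rw [← pow_succ, h1]
        _ ≤ q ^ (m - 1) * 1 := by
            apply mul_le_mul_of_nonneg_left (le_of_lt hq1) (by positivity)
        _ = q ^ (m - 1) := by ring
    have hsum : 4 * C ≤ 2 * (p * q ^ ((m + 1) - 1) * (T (m + 1)) ^ 2)
        + 2 * (p * q ^ (m - 1) * (T m) ^ 2) := by
      rw [hms]
      have hpq : (0 : ℝ) ≤ p * q ^ m := by positivity
      have h1 : p * q ^ m * (c (m + 1)) ^ 2 ≤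
          p * q ^ m * (2 * (T (m + 1)) ^ 2 + 2 * (T m) ^ 2) :=
        mul_le_mul_of_nonneg_left hcsq hpq
      have h3 : p * q ^ m * (2 * (T (m + 1)) ^ 2 + 2 * (T m) ^ 2) =
          2 * (p * q ^ m * (T (m + 1)) ^ 2) + 2 * (p * q ^ m * (T m) ^ 2) := by ring
      have h2 : p * q ^ m * (T m) ^ 2 ≤ p * q ^ (m - 1) * (T m) ^ 2 := by
        apply mul_le_mul_of_nonneg_right _ (sq_nonneg _)
        exact mul_le_mul_of_nonneg_left hqmm (le_of_lt hp0)
      linarith [hkey, h1, h2, h3]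
    by_cases hcase : C ≤ p * q ^ ((m + 1) - 1) * (T (m + 1)) ^ 2
    · exact ⟨m + 1, by omega, hcase⟩
    · refine ⟨m, hm1, ?_⟩
      push_neg at hcase
      linarith [hsum]
  -- the second moment is infinite
  have htop : ∫⁻ ω, (‖S ω‖₊ : ENNReal) ^ 2 ∂μ = ⊤ := by
    by_contra h
    set I : ENNReal := ∫⁻ ω, (‖S ω‖₊ : ENNReal) ^ 2 ∂μ with hI
    obtain ⟨k, hk1, hk⟩ := hgrow (I.toReal + 1) (by positivity)
    have h1 : ENNReal.ofReal (I.toReal + 1) ≤ I :=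
      le_trans (ENNReal.ofReal_le_ofReal hk) (hlow k hk1)
    have h2 : ENNReal.ofReal (I.toReal + 1) = I + 1 := by
      rw [ENNReal.ofReal_add ENNReal.toReal_nonneg zero_le_one, ENNReal.ofReal_one,
        ENNReal.ofReal_toReal h]
    rw [h2] at h1
    exact absurd h1 (not_le.2 (ENNReal.lt_add_right h one_ne_zero))
  -- conclude: evariance = ⊤
  apply ProbabilityTheory.evariance_eq_top hSmeas.aestronglyMeasurable
  intro hmem
  have hint := hmem.integrable_sq
  have hfin : ∫⁻ ω, (‖S ω ^ 2‖₊ : ENNReal) ∂μ < ⊤ := hint.2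
  simp_rw [nnnorm_pow, ENNReal.coe_pow] at hfin
  rw [htop] at hfin
  exact absurd hfin (lt_irrefl ⊤)

/-- For `N ~ Geometric(p)` (so `P(N ≥ j) = (1−p)^{j−1}`) and `g` continuously differentiable
with Lipschitz constant `κ` (i.e. `κ = sup |g'|`) satisfying `1 − p < κ² < 1`, the set of `x`
where the Russian roulette estimator has infinite variance has positive Lebesgue measure. -/
theorem stmt14 {Ω : Type*} [MeasurableSpace Ω] (μ : Measure Ω) [IsProbabilityMeasure μ]
    (p : ℝ) (hp0 : 0 < p) (hp1 : p < 1)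
    (N : Ω → ℕ) (hN : Measurable N) (hN1 : ∀ ω, 1 ≤ N ω)
    (hgeom : ∀ j : ℕ, 1 ≤ j → μ {ω | j ≤ N ω} = ENNReal.ofReal ((1 - p) ^ (j - 1)))
    (g : ℝ → ℝ) (hg : ContDiff ℝ 1 g) (κ : ℝ)
    (hκ : IsLUB (Set.range fun y => |deriv g y|) κ)
    (h1 : 1 - p < κ ^ 2) (h2 : κ ^ 2 < 1) :
    0 < volume {x : ℝ |
      ProbabilityTheory.evariance
        (fun ω => ∑ j ∈ Finset.Icc 1 (N ω),
          ((-1 : ℝ) ^ (j + 1) / (j : ℝ)) * (deriv g x) ^ j / ((1 - p) ^ (j - 1))) μ = ⊤} := by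
  have hD : Continuous (deriv g) := hg.continuous_deriv le_rfl
  set A : Set ℝ := {x | 1 - p < (deriv g x) ^ 2} with hA
  have hopen : IsOpen A := isOpen_lt continuous_const (hD.pow 2)
  -- A is nonempty
  have hκ0 : 0 ≤ κ := le_trans (abs_nonneg _) (hκ.1 (Set.mem_range_self 0))
  have hκpos : 0 < κ := by
    rcases lt_or_eq_of_le hκ0 with h | h
    · exact h
    · exfalso; rw [← h] at h1; simp at h1; linarith
  have hsq : Real.sqrt (1 - p) < κ := (Real.sqrt_lt' hκpos).2 h1
  have hne : A.Nonempty := by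
    by_contra hempty
    rw [Set.not_nonempty_iff_eq_empty] at hempty
    have hub : Real.sqrt (1 - p) ∈ upperBounds (Set.range fun y => |deriv g y|) := by
      rintro v ⟨y, rfl⟩
      by_contra hv
      push_neg at hv
      have hy : y ∈ A := by
        rw [hA, Set.mem_setOf_eq]
        have := pow_lt_pow_left₀ hv (Real.sqrt_nonneg _) two_ne_zero
        rwa [Real.sq_sqrt (by linarith), sq_abs] at this
      rw [hempty] at hy
      exact hy
    exact absurd (hκ.2 hub) (not_le.2 hsq)
  have hsub : A ⊆ {x : ℝ |
      ProbabilityTheory.evariance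
        (fun ω => ∑ j ∈ Finset.Icc 1 (N ω),
          ((-1 : ℝ) ^ (j + 1) / (j : ℝ)) * (deriv g x) ^ j / ((1 - p) ^ (j - 1))) μ = ⊤} := by
    intro x hx
    exact stmt14_core μ p hp0 hp1 N hN hgeom (deriv g x) hx
  exact lt_of_lt_of_le (hopen.measure_pos volume hne) (measure_mono hsub)
end
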